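/- arXiv:2106.09836 — 2 statements merged into one kernel-verified Lean document; each statement's English description precedes it below -/
import Mathlib

section
/- For cadlag functions f₁, f₂ : [0,∞) → ℝ with only nonnegative jumps, define s(x,y) = sup_{z∈[x,y]} (f₂(z) - f₁(z⁻)). Then s(x,y) - s(x,y⁻) = max(s(y,y) - s(x,y⁻), 0) ≤ f₂(y) - f₂(y⁻), where s(x,y⁻) = sup_{z∈[x,y)} (f₂(z) - f₁(z⁻)). -/
open Filter Set

/-- Left limit with the convention `f(0⁻) = 0`. -/
noncomputable def lml (f : ℝ → ℝ) (z : ℝ) : ℝ := if z ≤ 0 then 0 else Function.leftLim f z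

/-- Cadlag on `[0, ∞)`: right-continuous at every `x ≥ 0`, left limits exist at every `x > 0`. -/
def Cadlag (f : ℝ → ℝ) : Prop :=
  (∀ x : ℝ, 0 ≤ x → ContinuousWithinAt f (Set.Ici x) x) ∧
  (∀ x : ℝ, 0 < x → ∃ l : ℝ, Filter.Tendsto f (nhdsWithin x (Set.Iio x)) (nhds l))

/-- All jumps are nonnegative (with the convention `f(0⁻) = 0`). -/
def NonnegJumps (f : ℝ → ℝ) : Prop := ∀ z : ℝ, 0 ≤ z → lml f z ≤ f z

/-- `S f₁ f₂ x y = sup_{z ∈ [x,y]} (f₂ z - f₁ (z⁻))`. -/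
noncomputable def S (f₁ f₂ : ℝ → ℝ) (x y : ℝ) : ℝ :=
  sSup ((fun z => f₂ z - lml f₁ z) '' Set.Icc x y)

/-- `Sm f₁ f₂ x y = sup_{z ∈ [x,y)} (f₂ z - f₁ (z⁻))`. -/
noncomputable def Sm (f₁ f₂ : ℝ → ℝ) (x y : ℝ) : ℝ :=
  sSup ((fun z => f₂ z - lml f₁ z) '' Set.Ico x y)

/-- For `z > 0`, `f` tends to `lml f z` from the left. -/
lemma cadlag_leftLim {f : ℝ → ℝ} (hf : Cadlag f) {z : ℝ} (hz : 0 < z) :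
    Tendsto f (nhdsWithin z (Set.Iio z)) (nhds (lml f z)) := by
  obtain ⟨l, hl⟩ := hf.2 z hz
  have h : lml f z = l := by
    rw [lml, if_neg (not_le.mpr hz)]
    exact leftLim_eq_of_tendsto hl
  rw [h]; exact hl

lemma lml_le {f : ℝ → ℝ} (hf : Cadlag f) {a z c : ℝ} (ha : 0 ≤ a) (haz : a < z)
    (hb : ∀ w ∈ Set.Ioo a z, f w ≤ c) : lml f z ≤ c :=
  le_of_tendsto (cadlag_leftLim hf (lt_of_le_of_lt ha haz))
    (eventually_of_mem (Ioo_mem_nhdsLT_of_mem ⟨haz, le_refl z⟩) hb)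

lemma le_lml {f : ℝ → ℝ} (hf : Cadlag f) {a z c : ℝ} (ha : 0 ≤ a) (haz : a < z)
    (hb : ∀ w ∈ Set.Ioo a z, c ≤ f w) : c ≤ lml f z :=
  ge_of_tendsto (cadlag_leftLim hf (lt_of_le_of_lt ha haz))
    (eventually_of_mem (Ioo_mem_nhdsLT_of_mem ⟨haz, le_refl z⟩) hb)

lemma cadlag_right {f : ℝ → ℝ} (hf : Cadlag f) {t : ℝ} (ht : 0 ≤ t) {ε : ℝ} (hε : 0 < ε) :
    ∃ δ > 0, ∀ w, t ≤ w → w < t + δ → |f w - f t| < ε := by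
  have h := hf.1 t ht
  rw [ContinuousWithinAt, Metric.tendsto_nhdsWithin_nhds] at h
  obtain ⟨δ, hδ, h⟩ := h _ hε
  refine ⟨δ, hδ, fun w hw1 hw2 => ?_⟩
  have := h (mem_Ici.mpr hw1)
    (show dist w t < δ by rw [Real.dist_eq, abs_of_nonneg (by linarith)]; linarith)
  rwa [Real.dist_eq] at this

lemma cadlag_left {f : ℝ → ℝ} (hf : Cadlag f) {t : ℝ} (ht : 0 < t) {ε : ℝ} (hε : 0 < ε) :
    ∃ δ > 0, ∀ w, t - δ < w → w < t → |f w - lml f t| < ε := by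
  have h := cadlag_leftLim hf ht
  rw [Metric.tendsto_nhdsWithin_nhds] at h
  obtain ⟨δ, hδ, h⟩ := h _ hε
  refine ⟨δ, hδ, fun w hw1 hw2 => ?_⟩
  have := h (mem_Iio.mpr hw2)
    (show dist w t < δ by rw [Real.dist_eq, abs_of_nonpos (by linarith)]; linarith)
  rwa [Real.dist_eq] at this

/-- The integrand is bounded above on any `[x, y]` with `0 ≤ x`. -/
lemma bddAbove_g (f₁ f₂ : ℝ → ℝ) (h₁ : Cadlag f₁) (h₂ : Cadlag f₂) {x y : ℝ} (hx : 0 ≤ x) :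
    BddAbove ((fun z => f₂ z - lml f₁ z) '' Set.Icc x y) := by
  set g : ℝ → ℝ := fun z => f₂ z - lml f₁ z with hg
  have key : ∀ t ∈ Set.Icc x y, ∃ δ > 0,
      BddAbove (g '' (Set.Icc x y ∩ Set.Ioo (t - δ) (t + δ))) := by
    intro t ht
    have ht0 : 0 ≤ t := le_trans hx ht.1
    obtain ⟨δ₁, hδ₁, H₁⟩ := cadlag_right h₁ ht0 one_pos
    obtain ⟨δ₂, hδ₂, H₂⟩ := cadlag_right h₂ ht0 one_pos
    -- bound to the right (and at `t`)
    have right_bd : ∀ z, t < z → z < t + min δ₁ δ₂ → g z ≤ f₂ t + 1 - (f₁ t - 1) := by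
      intro z hz1 hz2
      have hf2 : f₂ z ≤ f₂ t + 1 := by
        have hz2' : z < t + δ₂ := by linarith [min_le_right δ₁ δ₂]
        have := abs_lt.mp (H₂ z (le_of_lt hz1) hz2')
        linarith [this.2]
      have hf1 : f₁ t - 1 ≤ lml f₁ z := by
        apply le_lml h₁ ht0 hz1
        intro w hw
        have := H₁ w (le_of_lt hw.1)
          (lt_trans hw.2 (lt_of_lt_of_le hz2 (by linarith [min_le_left δ₁ δ₂])))
        have := abs_lt.mp this
        linarith [this.1]
      simp only [hg]
      linarith
    rcases eq_or_lt_of_le ht0 with htz | htpos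
    · -- t = 0
      refine ⟨min δ₁ δ₂, lt_min hδ₁ hδ₂,
        ⟨max (f₂ t + 1 - (f₁ t - 1)) (g t), ?_⟩⟩
      rintro v ⟨z, ⟨hz1, hz2⟩, rfl⟩
      have hz0 : 0 ≤ z := le_trans hx hz1.1
      rcases eq_or_lt_of_le hz0 with h0 | h0
      · have : z = t := by rw [← h0, ← htz]
        rw [this]; exact le_max_right _ _
      · have hzt : t < z := by rw [← htz]; exact h0
        exact le_trans (right_bd z hzt hz2.2) (le_max_left _ _)
    · -- t > 0
      obtain ⟨δ₃, hδ₃, H₃⟩ := cadlag_left h₁ htpos one_pos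
      obtain ⟨δ₄, hδ₄, H₄⟩ := cadlag_left h₂ htpos one_pos
      set δ := min (min δ₁ δ₂) (min δ₃ δ₄) with hδdef
      have hδpos : 0 < δ := lt_min (lt_min hδ₁ hδ₂) (lt_min hδ₃ hδ₄)
      refine ⟨δ, hδpos,
        ⟨max (max (f₂ t + 1 - (f₁ t - 1)) (g t))
             (max (lml f₂ t + 1 - (lml f₁ t - 1)) (f₂ 0)), ?_⟩⟩
      rintro v ⟨z, ⟨hz1, hz2⟩, rfl⟩
      have hz0 : 0 ≤ z := le_trans hx hz1.1
      rcases lt_trichotomy z t with hlt | heq | hgt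
      · -- z < t
        have hzl : t - δ₃ < z := by
          have : t - δ ≤ z := le_of_lt hz2.1
          have : δ ≤ δ₃ := le_trans (min_le_right _ _) (min_le_left _ _)
          linarith [hz2.1]
        have hzl4 : t - δ₄ < z := by
          have : δ ≤ δ₄ := le_trans (min_le_right _ _) (min_le_right _ _)
          linarith [hz2.1]
        have hf2 : f₂ z ≤ lml f₂ t + 1 := by
          have := abs_lt.mp (H₄ z hzl4 hlt)
          linarith [this.2]
        rcases eq_or_lt_of_le hz0 with h0 | h0
        · -- z = 0
          have hl : lml f₁ z = 0 := by rw [lml, if_pos (le_of_eq h0.symm)]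
          have : g z = f₂ z - 0 := by rw [hg]; simp [hl]
          rw [this, ← h0]
          simp only [sub_zero]
          exact le_trans (le_max_right _ _) (le_max_right _ _)
        · -- 0 < z
          have hf1 : lml f₁ t - 1 ≤ lml f₁ z := by
            apply le_lml h₁ (le_max_right (t - δ₃) 0) (by simp [max_lt_iff]; exact ⟨hzl, h0⟩)
            intro w hw
            have hw3 : t - δ₃ < w := lt_of_le_of_lt (le_max_left _ _) hw.1
            have := abs_lt.mp (H₃ w hw3 (lt_trans hw.2 hlt))
            linarith [this.1]
          have : g z ≤ lml f₂ t + 1 - (lml f₁ t - 1) := by simp only [hg]; linarith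
          exact le_trans this (le_trans (le_max_left _ _) (le_max_right _ _))
      · rw [heq]; exact le_trans (le_max_right _ _) (le_max_left _ _)
      · -- z > t
        have hzr : z < t + min δ₁ δ₂ := by
          have : δ ≤ min δ₁ δ₂ := min_le_left _ _
          linarith [hz2.2]
        exact le_trans (right_bd z hgt hzr) (le_trans (le_max_left _ _) (le_max_left _ _))
  choose δ hδpos hbdd using key
  rcases le_or_gt x y with hxy | hxy
  · obtain ⟨T, hT⟩ := (isCompact_Icc : IsCompact (Set.Icc x y)).elim_nhds_subcover'
      (fun t ht => Set.Ioo (t - δ t ht) (t + δ t ht))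
      (fun t ht => Ioo_mem_nhds (by linarith [hδpos t ht]) (by linarith [hδpos t ht]))
    have hsub : g '' Set.Icc x y ⊆
        ⋃ t ∈ T, g '' (Set.Icc x y ∩ Set.Ioo (t.1 - δ t.1 t.2) (t.1 + δ t.1 t.2)) := by
      rintro v ⟨z, hz, rfl⟩
      obtain ⟨U, hU, hzU⟩ := Set.mem_iUnion₂.mp (hT hz)
      exact Set.mem_iUnion₂.mpr ⟨U, hU, Set.mem_image_of_mem g ⟨hz, hzU⟩⟩
    refine BddAbove.mono hsub ?_
    exact (Set.Finite.bddAbove_biUnion T.finite_toSet).mpr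
      (fun t ht => hbdd t.1 t.2)
  · rw [Set.Icc_eq_empty (not_le.mpr hxy), Set.image_empty]
    exact bddAbove_empty

/-- Left-limit bound: `f₂(y⁻) - f₁(y⁻) ≤ Sm`. -/
lemma key_left (f₁ f₂ : ℝ → ℝ) (h₁ : Cadlag f₁) (h₂ : Cadlag f₂) {x y : ℝ}
    (hx : 0 ≤ x) (hxy : x < y)
    (hb : BddAbove ((fun z => f₂ z - lml f₁ z) '' Set.Ico x y)) :
    lml f₂ y - lml f₁ y ≤ Sm f₁ f₂ x y := by
  have hy0 : 0 < y := lt_of_le_of_lt hx hxy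
  apply le_of_forall_sub_le
  intro ε hε
  obtain ⟨δ₁, hδ₁, H₁⟩ := cadlag_left h₁ hy0 (half_pos hε)
  obtain ⟨δ₂, hδ₂, H₂⟩ := cadlag_left h₂ hy0 (half_pos hε)
  set m := max (max (y - δ₁) (y - δ₂)) x with hm
  have hmy : m < y := by
    simp only [hm, max_lt_iff]
    exact ⟨⟨by linarith, by linarith⟩, hxy⟩
  set z := (m + y) / 2 with hz
  have hmz : m < z := by rw [hz]; linarith
  have hzy : z < y := by rw [hz]; linarith
  have hxz : x ≤ z := le_of_lt (lt_of_le_of_lt (le_max_right _ _) hmz)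
  have hzδ₂ : y - δ₂ < z := lt_of_le_of_lt (le_trans (le_max_right _ _) (le_max_left _ _)) hmz
  have hm0 : 0 ≤ m := le_trans hx (le_max_right _ _)
  have hf2 : lml f₂ y - ε / 2 ≤ f₂ z := by
    have := abs_lt.mp (H₂ z hzδ₂ hzy)
    linarith [this.1]
  have hf1 : lml f₁ z ≤ lml f₁ y + ε / 2 := by
    apply lml_le h₁ hm0 hmz
    intro w hw
    have hw1 : y - δ₁ < w :=
      lt_of_le_of_lt (le_trans (le_max_left _ _) (le_max_left _ _)) hw.1
    have := abs_lt.mp (H₁ w hw1 (lt_trans hw.2 hzy))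
    linarith [this.2]
  have hmem : f₂ z - lml f₁ z ≤ Sm f₁ f₂ x y :=
    le_csSup hb ⟨z, ⟨hxz, hzy⟩, rfl⟩
  linarith

theorem stmt2 (f₁ f₂ : ℝ → ℝ) (h₁ : Cadlag f₁) (h₂ : Cadlag f₂)
    (hj₁ : NonnegJumps f₁) (hj₂ : NonnegJumps f₂)
    (x y : ℝ) (hx : 0 ≤ x) (hxy : x < y) :
    S f₁ f₂ x y - Sm f₁ f₂ x y = max (S f₁ f₂ y y - Sm f₁ f₂ x y) 0 ∧
    max (S f₁ f₂ y y - Sm f₁ f₂ x y) 0 ≤ f₂ y - lml f₂ y := by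
  set g : ℝ → ℝ := fun z => f₂ z - lml f₁ z with hg
  have hxy' : x ≤ y := le_of_lt hxy
  have hy0 : 0 ≤ y := le_trans hx hxy'
  have hbdd : BddAbove (g '' Set.Icc x y) := bddAbove_g f₁ f₂ h₁ h₂ hx
  have hbIco : BddAbove (g '' Set.Ico x y) :=
    hbdd.mono (Set.image_mono Set.Ico_subset_Icc_self)
  have hSyy : S f₁ f₂ y y = g y := by
    rw [S, Set.Icc_self, Set.image_singleton, csSup_singleton]
  have hsplit : S f₁ f₂ x y = max (Sm f₁ f₂ x y) (g y) := by
    rw [S, ← Set.Ico_union_right hxy', Set.image_union, Set.image_singleton,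
      csSup_union hbIco ⟨g x, Set.mem_image_of_mem g ⟨le_refl x, hxy⟩⟩
        (bddAbove_singleton) (Set.singleton_nonempty _), csSup_singleton, Sm]
  constructor
  · rw [hSyy, hsplit, ← max_sub_sub_right, sub_self, max_comm]
  · rw [hSyy]
    apply max_le
    · have hjump : lml f₂ y - lml f₁ y ≤ Sm f₁ f₂ x y :=
        key_left f₁ f₂ h₁ h₂ hx hxy hbIco
      have : g y = f₂ y - lml f₁ y := rfl
      rw [this]
      linarith
    · linarith [hj₂ y hy0]
end

section
/- The Pitman transform W on pairs of cadlag functions with nonnegative jumps is idempotent: W(W(f₁,f₂)) = W(f₁,f₂), and its image is exactly the set of Pitman ordered pairs, i.e., pairs (g₁,g₂) with g₂(t) ≤ g₁(t⁻) for all t. -/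
open Filter Set

/-- First component of the Pitman transform. -/
noncomputable def Wp1 (f₁ f₂ : ℝ → ℝ) : ℝ → ℝ := fun t => f₁ t + S f₁ f₂ 0 t

/-- Second component of the Pitman transform. -/
noncomputable def Wp2 (f₁ f₂ : ℝ → ℝ) : ℝ → ℝ := fun t => f₂ t - S f₁ f₂ 0 t

/-- A cadlag function is bounded on `[0, t]`. -/
lemma cadlag_abs_bound {f : ℝ → ℝ} (hf : Cadlag f) (t : ℝ) :
    ∃ M : ℝ, 0 ≤ M ∧ ∀ z ∈ Set.Icc (0:ℝ) t, |f z| ≤ M := by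
  rcases lt_or_ge t 0 with ht | ht
  · exact ⟨0, le_rfl, fun z hz => absurd (hz.1.trans hz.2) (not_le.2 ht)⟩
  set K := Set.Icc (0:ℝ) t with hK
  have hcpt : IsCompact K := isCompact_Icc
  have key : ∀ x : ℝ, x ∈ K → ∃ M : ℝ, {z : ℝ | z ∈ K → |f z| ≤ M} ∈ nhds x := by
    intro x hx
    have hr : Tendsto f (nhdsWithin x (Set.Ici x)) (nhds (f x)) := hf.1 x hx.1
    have hrev : ∀ᶠ z in nhdsWithin x (Set.Ici x), |f z| < |f x| + 1 :=
      (hr.abs).eventually_lt_const (lt_add_one _)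
    rcases eq_or_lt_of_le hx.1 with hx0 | hx0
    · refine ⟨|f x| + 1, ?_⟩
      have hl : ∀ᶠ z in nhdsWithin x (Set.Iio x), z ∈ K → |f z| ≤ |f x| + 1 := by
        filter_upwards [eventually_mem_nhdsWithin] with z hz hzK
        exact absurd hzK.1 (not_le.2 (by rw [← hx0] at hz; exact hz))
      have hr' : ∀ᶠ z in nhdsWithin x (Set.Ici x), z ∈ K → |f z| ≤ |f x| + 1 :=
        hrev.mono fun z hz _ => hz.le
      have hcomb := Filter.eventually_sup.2 ⟨hl, hr'⟩
      rwa [nhdsLT_sup_nhdsGE] at hcomb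
    · obtain ⟨l, hl⟩ := hf.2 x hx0
      refine ⟨max (|f x| + 1) (|l| + 1), ?_⟩
      have h1 : ∀ᶠ z in nhdsWithin x (Set.Iio x), z ∈ K → |f z| ≤ max (|f x| + 1) (|l| + 1) :=
        ((hl.abs).eventually_lt_const (lt_add_one _)).mono
          fun z hz _ => hz.le.trans (le_max_right _ _)
      have h2 : ∀ᶠ z in nhdsWithin x (Set.Ici x), z ∈ K → |f z| ≤ max (|f x| + 1) (|l| + 1) :=
        hrev.mono fun z hz _ => hz.le.trans (le_max_left _ _)
      have hcomb := Filter.eventually_sup.2 ⟨h1, h2⟩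
      rwa [nhdsLT_sup_nhdsGE] at hcomb
  choose! Mf hMf using key
  obtain ⟨T, hTK, hTcov⟩ :=
    hcpt.elim_nhds_subcover (fun x => {z : ℝ | z ∈ K → |f z| ≤ Mf x}) hMf
  have h0K : (0:ℝ) ∈ K := ⟨le_rfl, ht⟩
  have hTne : T.Nonempty := by
    rcases Set.mem_iUnion₂.1 (hTcov h0K) with ⟨x, hxT, _⟩
    exact ⟨x, hxT⟩
  refine ⟨max (T.sup' hTne Mf) 0, le_max_right _ _, ?_⟩
  intro z hz
  rcases Set.mem_iUnion₂.1 (hTcov hz) with ⟨x, hxT, hzx⟩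
  exact (hzx hz).trans ((Finset.le_sup' Mf hxT).trans (le_max_left _ _))

/-- Left limits of a cadlag function bounded on `[0,t]` are bounded below. -/
lemma lml_bound_below {f : ℝ → ℝ} (hf : Cadlag f) {M t : ℝ} (hM : 0 ≤ M)
    (hb : ∀ z ∈ Set.Icc (0:ℝ) t, |f z| ≤ M) :
    ∀ z ∈ Set.Icc (0:ℝ) t, -M ≤ lml f z := by
  intro z hz
  rcases eq_or_lt_of_le hz.1 with h0 | h0
  · rw [lml, if_pos (le_of_eq h0.symm)]; linarith
  · obtain ⟨l, hl⟩ := hf.2 z h0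
    have hll : lml f z = l := by
      rw [lml, if_neg (not_le.2 h0)]
      exact leftLim_eq_of_tendsto hl
    rw [hll]
    refine ge_of_tendsto hl ?_
    filter_upwards [Ioo_mem_nhdsLT_of_mem (show z ∈ Set.Ioc (0:ℝ) z from ⟨h0, le_rfl⟩)]
      with y hy
    have hyK : y ∈ Set.Icc (0:ℝ) t := ⟨hy.1.le, hy.2.le.trans hz.2⟩
    linarith [abs_le.1 (hb y hyK)]

lemma S_zero_zero (f₁ f₂ : ℝ → ℝ) : S f₁ f₂ 0 0 = f₂ 0 := by
  rw [S, Set.Icc_self, Set.image_singleton, csSup_singleton]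
  simp [lml]

/-- The transformed pair is Pitman ordered. -/
lemma ordered_of_W {f₁ f₂ : ℝ → ℝ} (h1 : Cadlag f₁) (h2 : Cadlag f₂)
    (j1 : NonnegJumps f₁) (j2 : NonnegJumps f₂) :
    ∀ t : ℝ, 0 ≤ t → Wp2 f₁ f₂ t ≤ lml (Wp1 f₁ f₂) t := by
  intro t ht
  rcases eq_or_lt_of_le ht with ht0 | ht0
  · rw [Wp2, ← ht0, S_zero_zero, lml, if_pos le_rfl]
    simp
  -- now 0 < t
  obtain ⟨M₁, hM₁0, hM₁⟩ := cadlag_abs_bound h1 t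
  obtain ⟨M₂, hM₂0, hM₂⟩ := cadlag_abs_bound h2 t
  have hf20 : 0 ≤ f₂ 0 := by
    have := j2 0 le_rfl
    rwa [lml, if_pos le_rfl] at this
  have hbdd : ∀ z ∈ Set.Icc (0:ℝ) t, f₂ z - lml f₁ z ≤ M₂ + M₁ := by
    intro z hz
    have h1' := (abs_le.1 (hM₂ z hz)).2
    have h2' := lml_bound_below h1 hM₁0 hM₁ z hz
    linarith
  have hbddA : BddAbove ((fun z => f₂ z - lml f₁ z) '' Set.Icc 0 t) := by
    refine ⟨M₂ + M₁, ?_⟩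
    rintro _ ⟨z, hz, rfl⟩
    exact hbdd z hz
  have hbddIco : BddAbove ((fun z => f₂ z - lml f₁ z) '' Set.Ico 0 t) :=
    hbddA.mono (Set.image_mono Set.Ico_subset_Icc_self)
  have h00 : (fun z => f₂ z - lml f₁ z) 0 = f₂ 0 := by simp [lml]
  have hSm0 : 0 ≤ Sm f₁ f₂ 0 t := by
    have hmem : (fun z => f₂ z - lml f₁ z) 0 ∈ (fun z => f₂ z - lml f₁ z) '' Set.Ico 0 t :=
      Set.mem_image_of_mem _ ⟨le_rfl, ht0⟩
    have := le_csSup hbddIco hmem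
    rw [h00] at this
    rw [Sm]
    linarith
  have hht : f₂ t - lml f₁ t ≤ S f₁ f₂ 0 t := by
    rw [S]
    exact le_csSup hbddA (Set.mem_image_of_mem _ ⟨ht, le_rfl⟩)
  have hbddu : ∀ u : ℝ, u ≤ t → BddAbove ((fun z => f₂ z - lml f₁ z) '' Set.Icc 0 u) :=
    fun u hut => hbddA.mono (Set.image_mono (Set.Icc_subset_Icc le_rfl hut))
  have htend : Tendsto (fun u => S f₁ f₂ 0 u) (nhdsWithin t (Set.Iio t))
      (nhds (Sm f₁ f₂ 0 t)) := by
    rw [tendsto_order]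
    constructor
    · intro a ha
      rw [Sm] at ha
      have hne : ((fun z => f₂ z - lml f₁ z) '' Set.Ico 0 t).Nonempty :=
        ⟨_, Set.mem_image_of_mem _ (⟨le_rfl, ht0⟩ : (0:ℝ) ∈ Set.Ico (0:ℝ) t)⟩
      obtain ⟨b, hbmem, hab⟩ := exists_lt_of_lt_csSup hne ha
      obtain ⟨z₀, hz₀, rfl⟩ := hbmem
      filter_upwards [Ioo_mem_nhdsLT_of_mem
        (show t ∈ Set.Ioc z₀ t from ⟨hz₀.2, le_rfl⟩)] with u hu
      have hle : (fun z => f₂ z - lml f₁ z) z₀ ≤ S f₁ f₂ 0 u := by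
        rw [S]
        exact le_csSup (hbddu u hu.2.le) (Set.mem_image_of_mem _ ⟨hz₀.1, hu.1.le⟩)
      linarith
    · intro a ha
      filter_upwards [Ioo_mem_nhdsLT_of_mem
        (show t ∈ Set.Ioc (0:ℝ) t from ⟨ht0, le_rfl⟩)] with u hu
      have hle : S f₁ f₂ 0 u ≤ Sm f₁ f₂ 0 t := by
        rw [S, Sm]
        refine csSup_le_csSup hbddIco
          ⟨_, Set.mem_image_of_mem _ (⟨le_rfl, hu.1.le⟩ : (0:ℝ) ∈ Set.Icc (0:ℝ) u)⟩
          (Set.image_mono ?_)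
        intro z hz
        exact ⟨hz.1, lt_of_le_of_lt hz.2 hu.2⟩
      linarith
  obtain ⟨l₁, hl₁⟩ := h1.2 t ht0
  have hlml1 : lml f₁ t = l₁ := by
    rw [lml, if_neg (not_le.2 ht0)]
    exact leftLim_eq_of_tendsto hl₁
  have hWtend : Tendsto (Wp1 f₁ f₂) (nhdsWithin t (Set.Iio t))
      (nhds (l₁ + Sm f₁ f₂ 0 t)) := hl₁.add htend
  have hlmlW : lml (Wp1 f₁ f₂) t = l₁ + Sm f₁ f₂ 0 t := by
    rw [lml, if_neg (not_le.2 ht0)]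
    exact leftLim_eq_of_tendsto hWtend
  rw [Wp2, hlmlW]
  rw [hlml1] at hht
  linarith

theorem stmt6 :
    (∀ f₁ f₂ : ℝ → ℝ, Cadlag f₁ → Cadlag f₂ → NonnegJumps f₁ → NonnegJumps f₂ →
      (∀ t : ℝ, 0 ≤ t →
          Wp1 (Wp1 f₁ f₂) (Wp2 f₁ f₂) t = Wp1 f₁ f₂ t ∧
          Wp2 (Wp1 f₁ f₂) (Wp2 f₁ f₂) t = Wp2 f₁ f₂ t) ∧
      (∀ t : ℝ, 0 ≤ t → Wp2 f₁ f₂ t ≤ lml (Wp1 f₁ f₂) t)) ∧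
    (∀ g₁ g₂ : ℝ → ℝ, Cadlag g₁ → Cadlag g₂ → NonnegJumps g₁ → NonnegJumps g₂ →
      (∀ t : ℝ, 0 ≤ t → g₂ t ≤ lml g₁ t) →
      ∃ f₁ f₂ : ℝ → ℝ, Cadlag f₁ ∧ Cadlag f₂ ∧ NonnegJumps f₁ ∧ NonnegJumps f₂ ∧
        ∀ t : ℝ, 0 ≤ t → Wp1 f₁ f₂ t = g₁ t ∧ Wp2 f₁ f₂ t = g₂ t) := by
  constructor
  · intro f₁ f₂ h1 h2 j1 j2
    have hord := ordered_of_W h1 h2 j1 j2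
    refine ⟨?_, hord⟩
    intro t ht
    have hW20 : Wp2 f₁ f₂ 0 = 0 := by
      rw [Wp2, S_zero_zero]; ring
    have hub : ∀ y ∈ (fun z => Wp2 f₁ f₂ z - lml (Wp1 f₁ f₂) z) '' Set.Icc 0 t, y ≤ 0 := by
      rintro _ ⟨z, hz, rfl⟩
      have := hord z hz.1
      simp only
      linarith
    have hS0 : S (Wp1 f₁ f₂) (Wp2 f₁ f₂) 0 t = 0 := by
      rw [S]
      apply le_antisymm
      · exact csSup_le ⟨_, Set.mem_image_of_mem _ (⟨le_rfl, ht⟩ : (0:ℝ) ∈ Set.Icc (0:ℝ) t)⟩ hub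
      · refine le_csSup ⟨0, hub⟩ ?_
        refine ⟨0, ⟨le_rfl, ht⟩, ?_⟩
        simp [hW20, lml]
    constructor
    · show Wp1 f₁ f₂ t + S (Wp1 f₁ f₂) (Wp2 f₁ f₂) 0 t = Wp1 f₁ f₂ t
      rw [hS0]; ring
    · show Wp2 f₁ f₂ t - S (Wp1 f₁ f₂) (Wp2 f₁ f₂) 0 t = Wp2 f₁ f₂ t
      rw [hS0]; ring
  · intro g₁ g₂ h1 h2 j1 j2 hord
    refine ⟨g₁, g₂, h1, h2, j1, j2, ?_⟩
    intro t ht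
    have hg20 : g₂ 0 = 0 := by
      have ha := hord 0 le_rfl
      have hb := j2 0 le_rfl
      rw [lml, if_pos le_rfl] at ha hb
      linarith
    have hub : ∀ y ∈ (fun z => g₂ z - lml g₁ z) '' Set.Icc 0 t, y ≤ 0 := by
      rintro _ ⟨z, hz, rfl⟩
      have := hord z hz.1
      simp only
      linarith
    have hS0 : S g₁ g₂ 0 t = 0 := by
      rw [S]
      apply le_antisymm
      · exact csSup_le ⟨_, Set.mem_image_of_mem _ (⟨le_rfl, ht⟩ : (0:ℝ) ∈ Set.Icc (0:ℝ) t)⟩ hub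
      · refine le_csSup ⟨0, hub⟩ ?_
        refine ⟨0, ⟨le_rfl, ht⟩, ?_⟩
        simp [hg20, lml]
    constructor
    · show g₁ t + S g₁ g₂ 0 t = g₁ t
      rw [hS0]; ring
    · show g₂ t - S g₁ g₂ 0 t = g₂ t
      rw [hS0]; ring
end
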